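/- Let f : ℝ^p → ℝ ∪ {+∞} be standard self-concordant with positive definite Hessians on its open convex domain, g : ℝ^p → ℝ ∪ {+∞} proper, closed, convex, τ₀ ∈ (0,1) fixed, x⁰ ∈ dom f ∩ dom g, and ξ⁰ ∈ ∂g(x⁰). For t ∈ (0,1], let x*_t be a solution of the auxiliary optimality condition 0 ∈ ∇f(x*_t) − (1/τ₀ − 1)ξ⁰ − t(∇f(x⁰) + ξ⁰) + (1/τ₀)∂g(x*_t). Then for t, t̂ ∈ (0,1]: ‖x*_t − x⁰‖_{x⁰} / (1 + ‖x*_t − x⁰‖_{x⁰}) ≤ |t − 1|·‖∇f(x⁰) + ξ⁰‖*_{x⁰}, and ‖x*_t − x*_t̂‖_{x*_t} / (1 + ‖x*_t − x*_t̂‖_{x*_t}) ≤ |t − t̂|·‖∇f(x⁰) + ξ⁰‖*_{x*_t}. -/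

import Mathlib

open Set
open scoped RealInnerProductSpace

noncomputable section

/-- `ℝ^p` with the Euclidean inner product. -/
abbrev Euc (p : ℕ) := EuclideanSpace ℝ (Fin p)

/-- The weighted (local) norm `‖u‖_H := √⟪H u, u⟫` induced by an operator `H`. -/
noncomputable def wnorm {p : ℕ} (H : Euc p →L[ℝ] Euc p) (u : Euc p) : ℝ :=
  Real.sqrt ⟪H u, u⟫

/-- `v` is a subgradient at `y` of the proper convex function equal to `g` on its
effective domain `S` (and `+∞` outside). -/
def IsSubgradient {p : ℕ} (g : Euc p → ℝ) (S : Set (Euc p)) (v y : Euc p) : Prop :=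
  y ∈ S ∧ ∀ z ∈ S, g y + ⟪v, z - y⟫ ≤ g z

/-- Closedness of the extended-real-valued function equal to `g` on `S` and `+∞`
outside, expressed as closedness of its epigraph. -/
def ClosedOn {p : ℕ} (g : Euc p → ℝ) (S : Set (Euc p)) : Prop :=
  IsClosed {q : Euc p × ℝ | q.1 ∈ S ∧ g q.1 ≤ q.2}

lemma wnorm_nonneg {p : ℕ} (H : Euc p →L[ℝ] Euc p) (u : Euc p) : 0 ≤ wnorm H u :=
  Real.sqrt_nonneg _

lemma wnorm_sub_comm {p : ℕ} (H : Euc p →L[ℝ] Euc p) (u v : Euc p) :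
    wnorm H (u - v) = wnorm H (v - u) := by
  have h : u - v = -(v - u) := by abel
  rw [wnorm, wnorm, h, map_neg, inner_neg_neg]

/-- expansion of the subgradient of the auxiliary problem against a test vector -/
lemma inner_aux {p : ℕ} (τ0 t : ℝ) (a b c u : Euc p) :
    ⟪τ0 • ((1/τ0 - 1) • a + t • b - c), u⟫
      = τ0 * ((1/τ0 - 1) * ⟪a, u⟫ + t * ⟪b, u⟫ - ⟪c, u⟫) := by
  rw [real_inner_smul_left, inner_sub_left, inner_add_left, real_inner_smul_left,
    real_inner_smul_left]
  try ring

lemma inner_flip {p : ℕ} (w u v : Euc p) : ⟪w, u - v⟫ = -⟪w, v - u⟫ := by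
  rw [← inner_neg_right, neg_sub]
/-- Cauchy–Schwarz for a symmetric positive semidefinite operator with inverse. -/
lemma key_cs {p : ℕ} {B Binv : Euc p →L[ℝ] Euc p}
    (hsym : ∀ u v : Euc p, ⟪B u, v⟫ = ⟪B v, u⟫)
    (hpsd : ∀ u : Euc p, 0 ≤ ⟪B u, u⟫)
    (hinv : ∀ u : Euc p, B (Binv u) = u) (v u : Euc p) :
    |⟪v, u⟫| ≤ wnorm Binv v * wnorm B u := by
  set w := Binv v with hw
  have hv : v = B w := (hinv v).symm
  have hq : ∀ x : ℝ, 0 ≤ ⟪B u, u⟫ * (x * x) + (2 * ⟪B w, u⟫) * x + ⟪B w, w⟫ := by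
    intro x
    have h0 := hpsd (x • u + w)
    have : ⟪B (x • u + w), x • u + w⟫
        = ⟪B u, u⟫ * (x * x) + (2 * ⟪B w, u⟫) * x + ⟪B w, w⟫ := by
      rw [map_add, map_smul]
      simp only [inner_add_left, inner_add_right, inner_smul_left, inner_smul_right,
        RCLike.ofReal_real_eq_id, id_eq]
      rw [hsym u w]
      ring_nf
      simp [real_inner_smul_left, real_inner_smul_right]
      ring
    linarith [this ▸ h0]
  have hd := discrim_le_zero hq
  rw [discrim] at hd
  have h2 : ⟪B w, u⟫ ^ 2 ≤ ⟪B w, w⟫ * ⟪B u, u⟫ := by nlinarith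
  have hBww : ⟪Binv v, v⟫ = ⟪B w, w⟫ := by
    nth_rewrite 2 [hv]
    rw [← hw, real_inner_comm]
  calc |⟪v, u⟫| = Real.sqrt (⟪B w, u⟫ ^ 2) := by
        rw [Real.sqrt_sq_eq_abs]; congr 1; rw [hv]
    _ ≤ Real.sqrt (⟪B w, w⟫ * ⟪B u, u⟫) := Real.sqrt_le_sqrt h2
    _ = wnorm Binv v * wnorm B u := by
        rw [Real.sqrt_mul (hpsd w)]
        unfold wnorm
        rw [hBww]
/-- Self-concordance gradient monotonicity bound. -/
lemma grad_mono {p : ℕ} {Df : Set (Euc p)} {f' : Euc p → Euc p}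
    {f'' : Euc p → Euc p →L[ℝ] Euc p} {f''' : Euc p → Euc p →L[ℝ] Euc p →L[ℝ] Euc p}
    (hDf_conv : Convex ℝ Df)
    (hf_hess : ∀ z ∈ Df, HasFDerivAt f' (f'' z) z)
    (hf_third : ∀ z ∈ Df, HasFDerivAt f'' (f''' z) z)
    (hf_posdef : ∀ z ∈ Df, ∀ u : Euc p, u ≠ 0 → 0 < ⟪f'' z u, u⟫)
    (hf_sc : ∀ z ∈ Df, ∀ u : Euc p, |⟪f''' z u u, u⟫| ≤ 2 * ⟪f'' z u, u⟫ ^ ((3 : ℝ) / 2))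
    {x y : Euc p} (hx : x ∈ Df) (hy : y ∈ Df) :
    (wnorm (f'' x) (y - x)) ^ 2 ≤ ⟪f' y - f' x, y - x⟫ * (1 + wnorm (f'' x) (y - x)) := by
  rcases eq_or_ne y x with rfl | hyx
  · simp [wnorm]
  set h := y - x with hh
  have hne : h ≠ 0 := sub_ne_zero.2 hyx
  set γ : ℝ → Euc p := fun s => x + s • h with hγdef
  have hγ0 : γ 0 = x := by simp [hγdef]
  have hγ1 : γ 1 = y := by simp [hγdef, hh]
  have hmem : ∀ s ∈ Icc (0:ℝ) 1, γ s ∈ Df := by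
    intro s hs
    have : γ s = (1 - s) • x + s • y := by
      simp only [hγdef, hh]; module
    rw [this]
    exact hDf_conv hx hy (by linarith [hs.2]) hs.1 (by ring)
  have hγ : ∀ s : ℝ, HasDerivAt γ h s := by
    intro s
    simpa [hγdef] using ((hasDerivAt_id s).smul_const h).const_add x
  set ψ : ℝ → ℝ := fun s => ⟪f'' (γ s) h, h⟫ with hψdef
  set ψd : ℝ → ℝ := fun s => ⟪f''' (γ s) h h, h⟫ with hψddef
  have hψpos : ∀ s ∈ Icc (0:ℝ) 1, 0 < ψ s := fun s hs => hf_posdef _ (hmem s hs) h hne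
  have hψ : ∀ s ∈ Icc (0:ℝ) 1, HasDerivAt ψ (ψd s) s := by
    intro s hs
    have h1 : HasDerivAt (fun s => f'' (γ s)) (f''' (γ s) h) s :=
      (hf_third _ (hmem s hs)).comp_hasDerivAt s (hγ s)
    have h2 : HasDerivAt (fun s => f'' (γ s) h) (f''' (γ s) h h) s := by
      simpa using h1.clm_apply (hasDerivAt_const s h)
    simpa using h2.inner ℝ (hasDerivAt_const s h)
  set r : ℝ := wnorm (f'' x) h with hrdef
  have hr : r = Real.sqrt (ψ 0) := by simp only [hrdef, wnorm, hψdef, hγ0]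
  have hrpos : 0 < r := by
    rw [hr]; exact Real.sqrt_pos.2 (hψpos 0 ⟨le_refl _, zero_le_one⟩)
  -- the function η = ψ^{-1/2} and its derivative
  set η : ℝ → ℝ := fun s => (Real.sqrt (ψ s))⁻¹ with hηdef
  set ηd : ℝ → ℝ := fun s => -(1 / (2 * Real.sqrt (ψ s)) * ψd s) / (Real.sqrt (ψ s)) ^ 2
    with hηddef
  have hη : ∀ s ∈ Icc (0:ℝ) 1, HasDerivAt η (ηd s) s := by
    intro s hs
    have hs0 : ψ s ≠ 0 := ne_of_gt (hψpos s hs)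
    have hsq : HasDerivAt (fun s => Real.sqrt (ψ s)) (1 / (2 * Real.sqrt (ψ s)) * ψd s) s :=
      (Real.hasDerivAt_sqrt hs0).comp s (hψ s hs)
    exact hsq.inv (Real.sqrt_ne_zero'.2 (hψpos s hs))
  have hrpow : ∀ s ∈ Icc (0:ℝ) 1, ψ s ^ ((3:ℝ)/2) = ψ s * Real.sqrt (ψ s) := by
    intro s hs
    rw [show ((3:ℝ)/2) = 1 + 1/2 by norm_num, Real.rpow_add (hψpos s hs), Real.rpow_one,
      ← Real.sqrt_eq_rpow]
  have hbound : ∀ s ∈ Ico (0:ℝ) 1, ‖ηd s‖ ≤ 1 := by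
    intro s hs
    have hs' : s ∈ Icc (0:ℝ) 1 := ⟨hs.1, le_of_lt hs.2⟩
    have hψp := hψpos s hs'
    have hsqp : 0 < Real.sqrt (ψ s) := Real.sqrt_pos.2 hψp
    have hsc := hf_sc _ (hmem s hs') h
    rw [hrpow s hs'] at hsc
    have hψdb : |ψd s| ≤ 2 * (ψ s * Real.sqrt (ψ s)) := hsc
    have hsq2 : (Real.sqrt (ψ s)) ^ 2 = ψ s := Real.sq_sqrt (le_of_lt hψp)
    rw [hηddef]
    simp only [Real.norm_eq_abs]
    rw [abs_div, abs_neg, abs_mul, abs_of_pos (by positivity : (0:ℝ) < 1 / (2 * Real.sqrt (ψ s))),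
      abs_of_pos (by positivity : (0:ℝ) < (Real.sqrt (ψ s)) ^ 2)]
    rw [div_le_one (by positivity)]
    rw [hsq2]
    calc 1 / (2 * Real.sqrt (ψ s)) * |ψd s|
        ≤ 1 / (2 * Real.sqrt (ψ s)) * (2 * (ψ s * Real.sqrt (ψ s))) := by
          apply mul_le_mul_of_nonneg_left hψdb (by positivity)
      _ = ψ s := by field_simp
  have hmvt := norm_image_sub_le_of_norm_deriv_le_segment'
    (fun s hs => (hη s hs).hasDerivWithinAt) hbound
  -- lower bound on ψ
  have hψ_lb : ∀ s ∈ Icc (0:ℝ) 1, r ^ 2 / (1 + s * r) ^ 2 ≤ ψ s := by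
    intro s hs
    have h1r : 0 < 1 + s * r := by nlinarith [hs.1, hrpos]
    have hψp := hψpos s hs
    have hsqp : 0 < Real.sqrt (ψ s) := Real.sqrt_pos.2 hψp
    have hmv := hmvt s hs
    rw [Real.norm_eq_abs] at hmv
    have hη0 : η 0 = r⁻¹ := by rw [hr]
    have hηs : η s ≤ r⁻¹ + s := by
      have := abs_sub_le_iff.1 hmv
      rw [hη0] at this; linarith [this.1]
    have hηs' : (Real.sqrt (ψ s))⁻¹ ≤ (1 + s * r) / r := by
      rw [hηdef] at hηs
      calc (Real.sqrt (ψ s))⁻¹ ≤ r⁻¹ + s := hηs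
        _ = (1 + s * r) / r := by field_simp
    have hkey : r / (1 + s * r) ≤ Real.sqrt (ψ s) := by
      rw [div_le_iff₀ h1r]
      have hsne : Real.sqrt (ψ s) ≠ 0 := ne_of_gt hsqp
      have hbr : (Real.sqrt (ψ s))⁻¹ * r ≤ 1 + s * r := by
        have := mul_le_mul_of_nonneg_right hηs' (le_of_lt hrpos)
        rwa [div_mul_cancel₀ _ (ne_of_gt hrpos)] at this
      have h4 := mul_le_mul_of_nonneg_left hbr (le_of_lt hsqp)
      rw [← mul_assoc, mul_inv_cancel₀ hsne, one_mul] at h4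
      exact h4
    have := pow_le_pow_left₀ (by positivity) hkey 2
    calc r ^ 2 / (1 + s * r) ^ 2 = (r / (1 + s * r)) ^ 2 := by rw [div_pow]
      _ ≤ (Real.sqrt (ψ s)) ^ 2 := this
      _ = ψ s := Real.sq_sqrt (le_of_lt hψp)
  -- the function φ and the comparison function ℓ
  set φ : ℝ → ℝ := fun s => ⟪f' (γ s), h⟫ with hφdef
  have hφ : ∀ s ∈ Icc (0:ℝ) 1, HasDerivAt φ (ψ s) s := by
    intro s hs
    have h1 : HasDerivAt (fun s => f' (γ s)) (f'' (γ s) h) s :=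
      (hf_hess _ (hmem s hs)).comp_hasDerivAt s (hγ s)
    simpa using h1.inner ℝ (hasDerivAt_const s h)
  set ℓ : ℝ → ℝ := fun s => r - r * (1 + s * r)⁻¹ with hℓdef
  have hℓ : ∀ s ∈ Icc (0:ℝ) 1, HasDerivAt ℓ (r ^ 2 / (1 + s * r) ^ 2) s := by
    intro s hs
    have h1r : 0 < 1 + s * r := by nlinarith [hs.1, hrpos]
    have hin : HasDerivAt (fun s : ℝ => 1 + s * r) r s := by
      simpa using ((hasDerivAt_id s).mul_const r).const_add 1
    have h2 := ((hin.inv (ne_of_gt h1r)).const_mul r).const_sub r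
    rw [show r ^ 2 / (1 + s * r) ^ 2 = -(r * (-r / (1 + s * r) ^ 2)) by ring]
    exact h2
  set F : ℝ → ℝ := fun s => φ s - ℓ s with hFdef
  have hF : ∀ s ∈ Icc (0:ℝ) 1, HasDerivAt F (ψ s - r ^ 2 / (1 + s * r) ^ 2) s :=
    fun s hs => (hφ s hs).sub (hℓ s hs)
  have hmono : MonotoneOn F (Icc (0:ℝ) 1) := by
    apply monotoneOn_of_deriv_nonneg (convex_Icc 0 1)
    · exact fun s hs => (hF s hs).continuousAt.continuousWithinAt
    · intro s hs
      rw [interior_Icc] at hs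
      exact (hF s ⟨le_of_lt hs.1, le_of_lt hs.2⟩).differentiableAt.differentiableWithinAt
    · intro s hs
      rw [interior_Icc] at hs
      have hs' : s ∈ Icc (0:ℝ) 1 := ⟨le_of_lt hs.1, le_of_lt hs.2⟩
      rw [(hF s hs').deriv]
      linarith [hψ_lb s hs']
  have hF01 : F 0 ≤ F 1 := hmono (left_mem_Icc.2 zero_le_one) (right_mem_Icc.2 zero_le_one)
    zero_le_one
  have hℓ0 : ℓ 0 = 0 := by simp [hℓdef]
  have hℓ1 : ℓ 1 = r - r * (1 + r)⁻¹ := by norm_num [hℓdef]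
  have hφdiff : ℓ 1 - ℓ 0 ≤ φ 1 - φ 0 := by
    simp only [hFdef] at hF01; linarith
  rw [hℓ0, hℓ1] at hφdiff
  have hφ0 : φ 0 = ⟪f' x, h⟫ := by simp only [hφdef, hγ0]
  have hφ1 : φ 1 = ⟪f' y, h⟫ := by simp only [hφdef, hγ1]
  have hinner : ⟪f' y - f' x, y - x⟫ = φ 1 - φ 0 := by
    rw [hφ0, hφ1, ← hh, inner_sub_left]
  have h1r : 0 < 1 + r := by linarith
  have hrr : r - r * (1 + r)⁻¹ = r ^ 2 / (1 + r) := by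
    field_simp; ring
  rw [hrr, sub_zero] at hφdiff
  rw [hinner]
  calc r ^ 2 = r ^ 2 / (1 + r) * (1 + r) := by field_simp
    _ ≤ (φ 1 - φ 0) * (1 + r) := by
        apply mul_le_mul_of_nonneg_right hφdiff (le_of_lt h1r)

set_option maxHeartbeats 1000000 in
/-- Lemma: local-norm bounds for the solutions of the auxiliary
optimality condition used to find an initial point. -/
theorem stmt_7 {p : ℕ}
    (f g : Euc p → ℝ) (Df Dg : Set (Euc p))
    (f' : Euc p → Euc p)
    (f'' Hinv : Euc p → Euc p →L[ℝ] Euc p)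
    (f''' : Euc p → Euc p →L[ℝ] Euc p →L[ℝ] Euc p)
    (τ0 t t' : ℝ)
    (x0 ξ0 xt xt' : Euc p)
    -- `dom f` is open convex; `f` is three times differentiable there
    (hDf_open : IsOpen Df) (hDf_conv : Convex ℝ Df)
    (hf_convex : ConvexOn ℝ Df f)
    (hf_grad : ∀ z ∈ Df, HasGradientAt f (f' z) z)
    (hf_hess : ∀ z ∈ Df, HasFDerivAt f' (f'' z) z)
    (hf_third : ∀ z ∈ Df, HasFDerivAt f'' (f''' z) z)
    -- positive definite Hessians, with inverses `Hinv`
    (hf_posdef : ∀ z ∈ Df, ∀ u : Euc p, u ≠ 0 → 0 < ⟪f'' z u, u⟫)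
    (hHinv : ∀ z ∈ Df, ∀ u : Euc p, f'' z (Hinv z u) = u ∧ Hinv z (f'' z u) = u)
    -- `f` is standard self-concordant
    (hf_sc : ∀ z ∈ Df, ∀ u : Euc p,
      |⟪f''' z u u, u⟫| ≤ 2 * ⟪f'' z u, u⟫ ^ ((3 : ℝ) / 2))
    -- `g` is proper, closed, convex
    (hg_proper : Dg.Nonempty)
    (hg_convex : ConvexOn ℝ Dg g)
    (hg_closed : ClosedOn g Dg)
    -- fixed homotopy parameter, initial point, and subgradient
    (hτ0 : τ0 ∈ Ioo (0 : ℝ) 1)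
    (hx0 : x0 ∈ Df ∩ Dg)
    (hξ0 : IsSubgradient g Dg ξ0 x0)
    -- `xt` and `xt'` solve the auxiliary optimality condition
    -- `0 ∈ ∇f(x) - (1/τ0 - 1)ξ⁰ - t(∇f(x⁰) + ξ⁰) + (1/τ0)∂g(x)` at `t` and `t'`
    (ht : t ∈ Ioc (0 : ℝ) 1) (ht' : t' ∈ Ioc (0 : ℝ) 1)
    (hxt_mem : xt ∈ Df ∩ Dg) (hxt'_mem : xt' ∈ Df ∩ Dg)
    (hxt : IsSubgradient g Dg
      (τ0 • ((1 / τ0 - 1) • ξ0 + t • (f' x0 + ξ0) - f' xt)) xt)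
    (hxt' : IsSubgradient g Dg
      (τ0 • ((1 / τ0 - 1) • ξ0 + t' • (f' x0 + ξ0) - f' xt')) xt') :
    wnorm (f'' x0) (xt - x0) / (1 + wnorm (f'' x0) (xt - x0))
        ≤ |t - 1| * wnorm (Hinv x0) (f' x0 + ξ0) ∧
    wnorm (f'' xt) (xt - xt') / (1 + wnorm (f'' xt) (xt - xt'))
        ≤ |t - t'| * wnorm (Hinv xt) (f' x0 + ξ0) := by
  obtain ⟨hτ0pos, hτ01⟩ := hτ0
  have hτ0ne : τ0 ≠ 0 := ne_of_gt hτ0pos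
  -- symmetry of the Hessian
  have hsym : ∀ z ∈ Df, ∀ u v : Euc p, ⟪f'' z u, v⟫ = ⟪f'' z v, u⟫ := by
    intro z hz u v
    set L : Euc p →L[ℝ] Euc p →L[ℝ] ℝ := innerSL ℝ (E := Euc p) with hL
    have hLd : ∀ v : Euc p, L v = InnerProductSpace.toDual ℝ (Euc p) v := fun v =>
      ContinuousLinearMap.ext fun y => by
        rw [InnerProductSpace.toDual_apply_apply]; rfl
    have hev : ∀ᶠ y in nhds z, HasFDerivAt f (L (f' y)) y := by
      filter_upwards [hDf_open.mem_nhds hz] with w hw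
      rw [hLd]
      exact (hf_grad w hw).hasFDerivAt
    have hfd : HasFDerivAt (fun y => L (f' y)) (L.comp (f'' z)) z :=
      L.hasFDerivAt.comp z (hf_hess z hz)
    have hss := second_derivative_symmetric_of_eventually hev hfd u v
    exact hss
  -- positive semidefiniteness
  have hpsd : ∀ z ∈ Df, ∀ u : Euc p, 0 ≤ ⟪f'' z u, u⟫ := by
    intro z hz u
    rcases eq_or_ne u 0 with rfl | hu
    · simp
    · exact le_of_lt (hf_posdef z hz u hu)
  -- Cauchy-Schwarz with the local norms
  have hcs : ∀ z ∈ Df, ∀ v u : Euc p, |⟪v, u⟫| ≤ wnorm (Hinv z) v * wnorm (f'' z) u :=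
    fun z hz v u => key_cs (hsym z hz) (hpsd z hz) (fun w => (hHinv z hz w).1) v u
  constructor
  · -- first bound
    have h1 := hxt.2 x0 hx0.2
    have h2 := hξ0.2 xt hxt_mem.2
    have hsum : ⟪τ0 • ((1 / τ0 - 1) • ξ0 + t • (f' x0 + ξ0) - f' xt), x0 - xt⟫
        + ⟪ξ0, xt - x0⟫ ≤ 0 := by linarith
    rw [inner_aux, inner_flip ξ0 xt x0] at hsum
    have hB : ⟪f' x0 + ξ0, x0 - xt⟫ = ⟪f' x0, x0 - xt⟫ + ⟪ξ0, x0 - xt⟫ :=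
      inner_add_left _ _ _
    have hX : t * ⟪f' x0 + ξ0, x0 - xt⟫ ≤ ⟪ξ0, x0 - xt⟫ + ⟪f' xt, x0 - xt⟫ := by
      by_contra hcon
      push_neg at hcon
      have hAτ : τ0 * (1 / τ0 - 1) * ⟪ξ0, x0 - xt⟫ = (1 - τ0) * ⟪ξ0, x0 - xt⟫ := by
        have hτinv : τ0 * (1 / τ0 - 1) = 1 - τ0 := by field_simp
        rw [hτinv]
      nlinarith [hAτ, mul_pos hτ0pos (by linarith :
        (0:ℝ) < t * ⟪f' x0 + ξ0, x0 - xt⟫ - ⟪ξ0, x0 - xt⟫ - ⟪f' xt, x0 - xt⟫)]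
    have key1 : ⟪f' xt - f' x0, xt - x0⟫ ≤ (1 - t) * ⟪f' x0 + ξ0, x0 - xt⟫ := by
      rw [inner_sub_left, inner_flip (f' xt) xt x0, inner_flip (f' x0) xt x0]
      nlinarith [hX, hB]
    have low := grad_mono hDf_conv hf_hess hf_third hf_posdef hf_sc hx0.1 hxt_mem.1
    set r := wnorm (f'' x0) (xt - x0) with hrdef
    set c := wnorm (Hinv x0) (f' x0 + ξ0) with hcdef
    clear_value r c
    have hc0 : 0 ≤ c := hcdef ▸ wnorm_nonneg _ _
    have hr0 : 0 ≤ r := hrdef ▸ wnorm_nonneg _ _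
    have hCS := hcs x0 hx0.1 (f' x0 + ξ0) (x0 - xt)
    rw [wnorm_sub_comm (f'' x0) x0 xt, ← hrdef, ← hcdef] at hCS
    have up : ⟪f' xt - f' x0, xt - x0⟫ ≤ |t - 1| * c * r := by
      calc ⟪f' xt - f' x0, xt - x0⟫ ≤ (1 - t) * ⟪f' x0 + ξ0, x0 - xt⟫ := key1
        _ ≤ |(1 - t) * ⟪f' x0 + ξ0, x0 - xt⟫| := le_abs_self _
        _ = |1 - t| * |⟪f' x0 + ξ0, x0 - xt⟫| := abs_mul _ _
        _ ≤ |1 - t| * (c * r) := mul_le_mul_of_nonneg_left hCS (abs_nonneg _)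
        _ = |t - 1| * c * r := by rw [abs_sub_comm]; ring
    have h1r : 0 < 1 + r := by linarith
    rcases eq_or_lt_of_le hr0 with h0 | hpos
    · rw [← h0]
      simpa using mul_nonneg (abs_nonneg (t - 1)) hc0
    · have step : r ^ 2 ≤ |t - 1| * c * r * (1 + r) :=
        le_trans low (mul_le_mul_of_nonneg_right up (le_of_lt h1r))
      rw [div_le_iff₀ h1r]
      have hmul : r * r ≤ (|t - 1| * c * (1 + r)) * r := by linarith [step]
      exact le_of_mul_le_mul_right hmul hpos
  · -- second bound
    have h1 := hxt.2 xt' hxt'_mem.2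
    have h2 := hxt'.2 xt hxt_mem.2
    have hsum : ⟪τ0 • ((1 / τ0 - 1) • ξ0 + t • (f' x0 + ξ0) - f' xt), xt' - xt⟫
        + ⟪τ0 • ((1 / τ0 - 1) • ξ0 + t' • (f' x0 + ξ0) - f' xt'), xt - xt'⟫ ≤ 0 := by
      linarith
    rw [inner_aux, inner_aux, inner_flip ξ0 xt xt', inner_flip (f' x0 + ξ0) xt xt',
      inner_flip (f' xt') xt xt'] at hsum
    have hX : (t - t') * ⟪f' x0 + ξ0, xt' - xt⟫
        ≤ ⟪f' xt, xt' - xt⟫ - ⟪f' xt', xt' - xt⟫ := by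
      by_contra hcon
      push_neg at hcon
      nlinarith [mul_pos hτ0pos (by linarith :
        (0:ℝ) < (t - t') * ⟪f' x0 + ξ0, xt' - xt⟫
          - (⟪f' xt, xt' - xt⟫ - ⟪f' xt', xt' - xt⟫))]
    have key2 : ⟪f' xt' - f' xt, xt' - xt⟫ ≤ (t - t') * ⟪f' x0 + ξ0, xt - xt'⟫ := by
      rw [inner_sub_left, inner_flip (f' x0 + ξ0) xt xt']
      nlinarith [hX]
    have low := grad_mono hDf_conv hf_hess hf_third hf_posdef hf_sc hxt_mem.1 hxt'_mem.1
    rw [wnorm_sub_comm (f'' xt) xt' xt] at low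
    set r := wnorm (f'' xt) (xt - xt') with hrdef
    set c := wnorm (Hinv xt) (f' x0 + ξ0) with hcdef
    clear_value r c
    have hc0 : 0 ≤ c := hcdef ▸ wnorm_nonneg _ _
    have hr0 : 0 ≤ r := hrdef ▸ wnorm_nonneg _ _
    have hCS := hcs xt hxt_mem.1 (f' x0 + ξ0) (xt - xt')
    rw [← hrdef, ← hcdef] at hCS
    have up : ⟪f' xt' - f' xt, xt' - xt⟫ ≤ |t - t'| * c * r := by
      calc ⟪f' xt' - f' xt, xt' - xt⟫ ≤ (t - t') * ⟪f' x0 + ξ0, xt - xt'⟫ := key2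
        _ ≤ |(t - t') * ⟪f' x0 + ξ0, xt - xt'⟫| := le_abs_self _
        _ = |t - t'| * |⟪f' x0 + ξ0, xt - xt'⟫| := abs_mul _ _
        _ ≤ |t - t'| * (c * r) := mul_le_mul_of_nonneg_left hCS (abs_nonneg _)
        _ = |t - t'| * c * r := by ring
    have h1r : 0 < 1 + r := by linarith
    rcases eq_or_lt_of_le hr0 with h0 | hpos
    · rw [← h0]
      simpa using mul_nonneg (abs_nonneg (t - t')) hc0
    · have step : r ^ 2 ≤ |t - t'| * c * r * (1 + r) :=
        le_trans low (mul_le_mul_of_nonneg_right up (le_of_lt h1r))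
      rw [div_le_iff₀ h1r]
      have hmul : r * r ≤ (|t - t'| * c * (1 + r)) * r := by linarith [step]
      exact le_of_mul_le_mul_right hmul hpos

end
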